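/- For each positive integer n, det(xI_n − T_n) = Σ_{k=0}^{n} (−1)^{⌊(n+1)/2⌋ + ⌊3k/2⌋ − nk − k} · C(⌊(n+k)/2⌋, k) · x^k, where T_n is the n×n matrix with entries (T_n)_{ij} = [|i−j|=1] + [(i,j)=(1,1)]. -/

import Mathlib

open Matrix

def Tmat (n : ℕ) : Matrix (Fin n) (Fin n) ℝ :=
  Matrix.of fun i j =>
    (if (i : ℕ) + 1 = j ∨ (j : ℕ) + 1 = i then 1 else 0) +
      (if (i : ℕ) = 0 ∧ (j : ℕ) = 0 then 1 else 0)

def Mx (x : ℝ) (n : ℕ) : Matrix (Fin n) (Fin n) ℝ :=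
  x • (1 : Matrix (Fin n) (Fin n) ℝ) - Tmat n

lemma Mx_apply (x : ℝ) (n : ℕ) (i j : Fin n) :
    Mx x n i j = (if (i : ℕ) = (j : ℕ) then x else 0)
      - (if (i : ℕ) + 1 = j ∨ (j : ℕ) + 1 = i then 1 else 0)
      - (if (i : ℕ) = 0 ∧ (j : ℕ) = 0 then 1 else 0) := by
  simp [Mx, Tmat, Matrix.one_apply, Fin.ext_iff, sub_sub, mul_ite]

lemma det_rec (x : ℝ) (n : ℕ) :
    (Mx x (n + 2)).det = x * (Mx x (n + 1)).det - (Mx x n).det := by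
  have hv1 : ∀ i : Fin (n + 1), (((Fin.last (n + 1)).succAbove i : Fin (n + 2)) : ℕ) = i := by
    intro i; simp [Fin.succAbove_last]
  have hv2 : ∀ j : Fin n,
      ((((Fin.last n).castSucc).succAbove j.castSucc : Fin (n + 2)) : ℕ) = j := by
    intro j
    rw [Fin.succAbove_of_castSucc_lt _ _ (by simp [Fin.lt_def, j.isLt])]
    simp
  have hv3 : ((((Fin.last n).castSucc).succAbove (Fin.last n) : Fin (n + 2)) : ℕ) = n + 1 := by
    rw [Fin.succAbove_of_le_castSucc _ _ (le_refl _)]; simp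
  rw [Matrix.det_succ_row (Mx x (n + 2)) (Fin.last (n + 1)),
    Fin.sum_univ_castSucc, Fin.sum_univ_castSucc]
  have h0 : ∀ j : Fin n,
      (-1 : ℝ) ^ ((Fin.last (n + 1) : ℕ) + ((j.castSucc.castSucc : Fin (n+2)) : ℕ)) *
        Mx x (n + 2) (Fin.last (n + 1)) j.castSucc.castSucc *
        ((Mx x (n + 2)).submatrix (Fin.last (n + 1)).succAbove
          (j.castSucc.castSucc).succAbove).det = 0 := by
    intro j
    have hz : Mx x (n + 2) (Fin.last (n + 1)) j.castSucc.castSucc = 0 := by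
      rw [Mx_apply]
      simp only [Fin.val_last, Fin.coe_castSucc]
      have := j.isLt
      split_ifs <;> first | omega | tauto | norm_num
    rw [hz]; ring
  rw [Finset.sum_eq_zero (fun j _ => h0 j), zero_add]
  have e1 : Mx x (n + 2) (Fin.last (n + 1)) ((Fin.last n).castSucc) = -1 := by
    rw [Mx_apply]
    simp only [Fin.val_last, Fin.coe_castSucc]
    split_ifs <;> first | omega | tauto | norm_num
  have e2 : Mx x (n + 2) (Fin.last (n + 1)) (Fin.last (n + 1)) = x := by
    rw [Mx_apply]
    simp only [Fin.val_last]
    split_ifs <;> first | omega | tauto | norm_num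
  have hsub0 : (Mx x (n + 2)).submatrix (Fin.last (n + 1)).succAbove
      (Fin.last (n + 1)).succAbove = Mx x (n + 1) := by
    ext i j
    simp only [Matrix.submatrix_apply]
    rw [Mx_apply, Mx_apply, hv1 i, hv1 j]
  set S1 : Matrix (Fin (n + 1)) (Fin (n + 1)) ℝ :=
    (Mx x (n + 2)).submatrix (Fin.last (n + 1)).succAbove
      ((Fin.last n).castSucc).succAbove with hS1
  have hS1det : S1.det = - (Mx x n).det := by
    rw [Matrix.det_succ_column S1 (Fin.last n), Fin.sum_univ_castSucc]
    have z0 : ∀ i : Fin n,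
        (-1 : ℝ) ^ (((i.castSucc : Fin (n+1)) : ℕ) + ((Fin.last n : Fin (n+1)) : ℕ)) *
          S1 i.castSucc (Fin.last n) *
          (S1.submatrix i.castSucc.succAbove (Fin.last n).succAbove).det = 0 := by
      intro i
      have hz : S1 i.castSucc (Fin.last n) = 0 := by
        rw [hS1, Matrix.submatrix_apply, Mx_apply, hv1 i.castSucc, hv3]
        simp only [Fin.coe_castSucc]
        have := i.isLt
        split_ifs <;> first | omega | tauto | norm_num
      rw [hz]; ring
    rw [Finset.sum_eq_zero (fun i _ => z0 i), zero_add]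
    have hent : S1 (Fin.last n) (Fin.last n) = -1 := by
      rw [hS1, Matrix.submatrix_apply, Mx_apply, hv1 (Fin.last n), hv3]
      simp only [Fin.val_last]
      split_ifs <;> first | omega | tauto | norm_num
    have hsub2 : S1.submatrix (Fin.last n).succAbove (Fin.last n).succAbove = Mx x n := by
      ext i j
      simp only [hS1, Matrix.submatrix_apply, Fin.succAbove_last]
      rw [Mx_apply, Mx_apply, hv2 j]
      simp only [Fin.coe_castSucc]
    rw [hent, hsub2]
    have hsgn : (-1 : ℝ) ^ (((Fin.last n : Fin (n+1)) : ℕ) + ((Fin.last n : Fin (n+1)) : ℕ))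
        = 1 := Even.neg_one_pow ⟨n, by simp [Fin.val_last]; try ring⟩
    rw [hsgn]; ring
  rw [hS1det, hsub0, e1, e2]
  have s1 : (-1 : ℝ) ^ (((Fin.last (n+1) : Fin (n+2)) : ℕ)
      + (((Fin.last n).castSucc : Fin (n+2)) : ℕ)) = -1 :=
    Odd.neg_one_pow ⟨n, by simp [Fin.val_last, Fin.coe_castSucc]; try ring⟩
  have s2 : (-1 : ℝ) ^ (((Fin.last (n+1) : Fin (n+2)) : ℕ)
      + ((Fin.last (n+1) : Fin (n+2)) : ℕ)) = 1 :=
    Even.neg_one_pow ⟨n + 1, by simp [Fin.val_last]⟩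
  rw [s1, s2]
  ring


noncomputable def coef (n k : ℕ) : ℝ :=
  (-1 : ℝ) ^ ((((n + 1) / 2 : ℕ) : ℤ) + ((3 * k / 2 : ℕ) : ℤ) - (n : ℤ) * k - (k : ℤ)) *
    (Nat.choose ((n + k) / 2) k : ℝ)

lemma neg_one_zpow_sub (s t : ℕ) :
    (-1 : ℝ) ^ ((s : ℤ) - (t : ℤ)) = (-1 : ℝ) ^ (s + t) := by
  rw [zpow_sub₀ (by norm_num : (-1 : ℝ) ≠ 0), zpow_natCast, zpow_natCast, pow_add,
    div_eq_mul_inv, ← inv_pow]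
  norm_num

lemma neg_one_pow_congr_mod2 {a b : ℕ} (h : a % 2 = b % 2) : (-1 : ℝ) ^ a = (-1 : ℝ) ^ b := by
  conv_lhs => rw [← Nat.div_add_mod a 2]
  conv_rhs => rw [← Nat.div_add_mod b 2]
  rw [pow_add, pow_add, pow_mul, pow_mul, neg_one_sq, one_pow, one_pow, h]

/-- `coef` with a natural-number exponent. -/
lemma coef_eq (n k : ℕ) :
    coef n k = (-1 : ℝ) ^ ((n + 1) / 2 + 3 * k / 2 + (n * k + k)) *
      (Nat.choose ((n + k) / 2) k : ℝ) := by
  rw [coef]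
  congr 1
  rw [show (((n + 1) / 2 : ℕ) : ℤ) + ((3 * k / 2 : ℕ) : ℤ) - (n : ℤ) * k - (k : ℤ)
      = (((n + 1) / 2 + 3 * k / 2 : ℕ) : ℤ) - ((n * k + k : ℕ) : ℤ) from by push_cast; ring,
    neg_one_zpow_sub]

lemma coef_zero_of_gt {n k : ℕ} (h : n < k) : coef n k = 0 := by
  have : (n + k) / 2 < k := by omega
  rw [coef, Nat.choose_eq_zero_of_lt this]
  norm_num

-- parity fact P1
lemma par1 (n k : ℕ) :
    ((n + 2 + 1) / 2 + 3 * (k + 1) / 2 + ((n + 2) * (k + 1) + (k + 1))) % 2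
      = ((n + 1 + 1) / 2 + 3 * k / 2 + ((n + 1) * k + k)) % 2 := by
  rcases Nat.even_or_odd n with ⟨a, rfl⟩ | ⟨a, rfl⟩ <;>
    rcases Nat.even_or_odd k with ⟨b, rfl⟩ | ⟨b, rfl⟩
  · obtain ⟨q1, h1⟩ : ∃ q, (a + a + 2) * (b + b + 1) = q + q := ⟨(a + 1) * (b + b + 1), by ring⟩
    obtain ⟨q2, h2⟩ : ∃ q, (a + a + 1) * (b + b) = q + q := ⟨(a + a + 1) * b, by ring⟩
    rw [h1, h2, show (a + a + 2 + 1) / 2 = a + 1 from by omega,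
      show 3 * (b + b + 1) / 2 = 3 * b + 1 from by omega,
      show (a + a + 1 + 1) / 2 = a + 1 from by omega,
      show 3 * (b + b) / 2 = 3 * b from by omega]
    omega
  · obtain ⟨q1, h1⟩ : ∃ q, (a + a + 2) * (2 * b + 1 + 1) = q + q := ⟨(a + 1) * (2 * b + 2), by ring⟩
    obtain ⟨q2, h2⟩ : ∃ q, (a + a + 1) * (2 * b + 1) = q + q + 1 := ⟨2 * a * b + a + b, by ring⟩
    rw [h1, h2, show (a + a + 2 + 1) / 2 = a + 1 from by omega,
      show 3 * (2 * b + 1 + 1) / 2 = 3 * b + 3 from by omega,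
      show (a + a + 1 + 1) / 2 = a + 1 from by omega,
      show 3 * (2 * b + 1) / 2 = 3 * b + 1 from by omega]
    omega
  · obtain ⟨q1, h1⟩ : ∃ q, (2 * a + 1 + 2) * (b + b + 1) = q + q + 1 :=
      ⟨2 * a * b + a + 3 * b + 1, by ring⟩
    obtain ⟨q2, h2⟩ : ∃ q, (2 * a + 1 + 1) * (b + b) = q + q := ⟨(a + 1) * (b + b), by ring⟩
    rw [h1, h2, show (2 * a + 1 + 2 + 1) / 2 = a + 2 from by omega,
      show 3 * (b + b + 1) / 2 = 3 * b + 1 from by omega,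
      show (2 * a + 1 + 1 + 1) / 2 = a + 1 from by omega,
      show 3 * (b + b) / 2 = 3 * b from by omega]
    omega
  · obtain ⟨q1, h1⟩ : ∃ q, (2 * a + 1 + 2) * (2 * b + 1 + 1) = q + q :=
      ⟨(2 * a + 3) * (b + 1), by ring⟩
    obtain ⟨q2, h2⟩ : ∃ q, (2 * a + 1 + 1) * (2 * b + 1) = q + q := ⟨(a + 1) * (2 * b + 1), by ring⟩
    rw [h1, h2, show (2 * a + 1 + 2 + 1) / 2 = a + 2 from by omega,
      show 3 * (2 * b + 1 + 1) / 2 = 3 * b + 3 from by omega,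
      show (2 * a + 1 + 1 + 1) / 2 = a + 1 from by omega,
      show 3 * (2 * b + 1) / 2 = 3 * b + 1 from by omega]
    omega

-- parity fact P2
lemma par2 (n k : ℕ) :
    ((n + 1) / 2 + 3 * (k + 1) / 2 + (n * (k + 1) + (k + 1))) % 2
      = ((n + 2 + 1) / 2 + 3 * (k + 1) / 2 + ((n + 2) * (k + 1) + (k + 1)) + 1) % 2 := by
  rw [show (n + 2) * (k + 1) = n * (k + 1) + 2 * (k + 1) from by ring,
    show (n + 2 + 1) / 2 = (n + 1) / 2 + 1 from by omega]
  obtain ⟨p, hp⟩ : ∃ p, n * (k + 1) = p := ⟨_, rfl⟩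
  obtain ⟨a1, ha1⟩ : ∃ a, (n + 1) / 2 = a := ⟨_, rfl⟩
  obtain ⟨a2, ha2⟩ : ∃ a, 3 * (k + 1) / 2 = a := ⟨_, rfl⟩
  rw [hp, ha1, ha2]
  omega

-- parity fact P3
lemma par3 (n : ℕ) :
    ((n + 2 + 1) / 2 + 3 * 0 / 2 + ((n + 2) * 0 + 0)) % 2
      = ((n + 1) / 2 + 3 * 0 / 2 + (n * 0 + 0) + 1) % 2 := by
  rw [show (n + 2 + 1) / 2 = (n + 1) / 2 + 1 from by omega]
  omega

lemma coef_key (n k : ℕ) : coef (n + 2) (k + 1) = coef (n + 1) k - coef n (k + 1) := by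
  rw [coef_eq, coef_eq, coef_eq]
  have h1 : (n + 2 + (k + 1)) / 2 = (n + k + 1) / 2 + 1 := by omega
  have h2 : (n + 1 + k) / 2 = (n + k + 1) / 2 := by omega
  have h3 : (n + (k + 1)) / 2 = (n + k + 1) / 2 := by omega
  rw [h1, h2, h3, Nat.choose_succ_succ ((n + k + 1) / 2) k]
  have s1 : (-1 : ℝ) ^ ((n + 1 + 1) / 2 + 3 * k / 2 + ((n + 1) * k + k))
      = (-1 : ℝ) ^ ((n + 2 + 1) / 2 + 3 * (k + 1) / 2 + ((n + 2) * (k + 1) + (k + 1))) :=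
    neg_one_pow_congr_mod2 (par1 n k).symm
  have s2 : (-1 : ℝ) ^ ((n + 1) / 2 + 3 * (k + 1) / 2 + (n * (k + 1) + (k + 1)))
      = - (-1 : ℝ) ^ ((n + 2 + 1) / 2 + 3 * (k + 1) / 2 + ((n + 2) * (k + 1) + (k + 1))) := by
    rw [neg_one_pow_congr_mod2 (par2 n k), pow_succ]
    ring
  rw [s1, s2]
  push_cast
  ring

lemma coef_zero_key (n : ℕ) : coef (n + 2) 0 = - coef n 0 := by
  rw [coef_eq, coef_eq]
  have s : (-1 : ℝ) ^ ((n + 2 + 1) / 2 + 3 * 0 / 2 + ((n + 2) * 0 + 0))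
      = - (-1 : ℝ) ^ ((n + 1) / 2 + 3 * 0 / 2 + (n * 0 + 0)) := by
    rw [neg_one_pow_congr_mod2 (par3 n), pow_succ]
    ring
  rw [s, show (n + 2 + 0) / 2 = (n + 0) / 2 + 1 from by omega]
  simp

lemma sum_rec (x : ℝ) (n : ℕ) :
    ∑ k ∈ Finset.range (n + 3), coef (n + 2) k * x ^ k
      = x * ∑ k ∈ Finset.range (n + 2), coef (n + 1) k * x ^ k
        - ∑ k ∈ Finset.range (n + 1), coef n k * x ^ k := by
  have hext : ∑ k ∈ Finset.range (n + 3), coef n k * x ^ k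
      = ∑ k ∈ Finset.range (n + 1), coef n k * x ^ k := by
    conv_lhs => rw [Finset.sum_range_succ, Finset.sum_range_succ]
    rw [coef_zero_of_gt (show n < n + 2 by omega), coef_zero_of_gt (show n < n + 1 by omega)]
    ring
  rw [← hext, Finset.sum_range_succ' (fun k => coef (n + 2) k * x ^ k) (n + 2),
    Finset.sum_range_succ' (fun k => coef n k * x ^ k) (n + 2), coef_zero_key, Finset.mul_sum]
  have h1 : ∑ k ∈ Finset.range (n + 2), coef (n + 2) (k + 1) * x ^ (k + 1)
      = ∑ k ∈ Finset.range (n + 2),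
          (x * (coef (n + 1) k * x ^ k) - coef n (k + 1) * x ^ (k + 1)) :=
    Finset.sum_congr rfl fun k _ => by rw [coef_key]; ring
  rw [h1, Finset.sum_sub_distrib]
  ring

noncomputable def pol (x : ℝ) : ℕ → ℝ
  | 0 => 1
  | 1 => x - 1
  | (n + 2) => x * pol x (n + 1) - pol x n

lemma pol_eq_sum (x : ℝ) : ∀ n, pol x n = ∑ k ∈ Finset.range (n + 1), coef n k * x ^ k := by
  intro n
  induction n using Nat.twoStepInduction with
  | zero =>
    rw [pol]
    simp [coef]
  | one =>
    rw [pol]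
    rw [Finset.sum_range_succ, Finset.sum_range_succ, Finset.sum_range_zero]
    simp [coef]
    ring
  | more n ih1 ih2 =>
    rw [pol, ih1, ih2, ← sum_rec]

lemma det_Mx (x : ℝ) : ∀ n, (Mx x n).det = pol x n := by
  intro n
  induction n using Nat.twoStepInduction with
  | zero => simp [pol]
  | one => simp [Matrix.det_fin_one, Mx_apply, pol]
  | more n ih1 ih2 =>
    rw [det_rec, ih1, ih2]
    conv_rhs => rw [pol]

/-- For each positive integer `n` and all real `x`:
`det(x·I_n − T_n) = ∑_{k=0}^{n} (−1)^{⌊(n+1)/2⌋+⌊3k/2⌋−nk−k} C(⌊(n+k)/2⌋,k) x^k`. -/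
theorem det_Tmat_explicit (n : ℕ) (hn : 0 < n) (x : ℝ) :
    (x • (1 : Matrix (Fin n) (Fin n) ℝ) - Tmat n).det =
      ∑ k ∈ Finset.range (n + 1),
        (-1 : ℝ) ^ ((((n + 1) / 2 : ℕ) : ℤ) + ((3 * k / 2 : ℕ) : ℤ) - (n : ℤ) * k - (k : ℤ)) *
          (Nat.choose ((n + k) / 2) k : ℝ) * x ^ k := by
  rw [show (x • (1 : Matrix (Fin n) (Fin n) ℝ) - Tmat n) = Mx x n from rfl,
    det_Mx, pol_eq_sum]
  simp only [coef]
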